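/- If two strings X and Y of equal length order-preserving match (i.e., for all indices i, j: X[i] ≤ X[j] iff Y[i] ≤ Y[j]), then CT(X) = CT(Y). The converse does not hold in general. -/

import Mathlib

open List

inductive Shape where
  | nil : Shape
  | node : Shape → Shape → Shape
deriving DecidableEq

inductive BTree (α : Type*) where
  | nil : BTree α
  | node : BTree α → α → BTree α → BTree α

def BTree.shape {α : Type*} : BTree α → Shape
  | .nil => .nil
  | .node l _ r => .node l.shape r.shape

def BTree.rootVal {α : Type*} : BTree α → Option α
  | .nil => none
  | .node _ v _ => some v

section
variable {α : Type*} [LinearOrder α] [Inhabited α]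

/-- Parent-distance value at 1-based position `i` of `S`. -/
def pdVal (S : List α) (i : ℕ) : ℕ :=
  let J := (Finset.Ico 1 i).filter (fun j => S.getD (j-1) default ≤ S.getD (i-1) default)
  if h : J.Nonempty then i - J.max' h else 0

/-- Parent-distance encoding of `S` (1-based positions). -/
def PD (S : List α) : List ℕ := (List.range S.length).map (fun k => pdVal S (k+1))

/-- 0-based index of the leftmost minimum of `S`. -/
def leftmostMinIdx (S : List α) : ℕ :=
  ((List.range S.length).argmin (fun j => S.getD j default)).getD 0

def CTaux : ℕ → List α → BTree α
  | 0, _ => .nil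
  | (n+1), S =>
    if S.isEmpty then .nil else
      let i := leftmostMinIdx S
      .node (CTaux n (S.take i)) (S.getD i default) (CTaux n (S.drop (i+1)))

/-- The (labeled) Cartesian tree of `S`. -/
def CT (S : List α) : BTree α := CTaux S.length S

/-- Front pointers of a sequence `u` of naturals (1-based positions `k ≥ 2` with `k - u[k] = 1`). -/
def frontPointers (u : List ℕ) : Finset ℕ :=
  (Finset.Icc 2 u.length).filter (fun k => k - u.getD (k-1) 0 = 1)

/-- `FP(S)[i]`: number of front pointers of `PD(S[i..])` (1-based `i`). -/
def FPval (S : List α) (i : ℕ) : ℕ := (frontPointers (PD (S.drop (i-1)))).card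

/-- The FP encoding of `S`. -/
def FP (S : List α) : List ℕ := (List.range S.length).map (fun k => FPval S (k+1))

end


lemma argmin_range_congr {α β : Type*} [LinearOrder α] [LinearOrder β]
    (f : ℕ → α) (g : ℕ → β) :
    ∀ n, (∀ i j, i < n → j < n → (f i ≤ f j ↔ g i ≤ g j)) →
      (List.range n).argmin f = (List.range n).argmin g := by
  intro n
  induction n with
  | zero => intro _; simp
  | succ n ih =>
    intro h
    have h' : ∀ i j, i < n → j < n → (f i ≤ f j ↔ g i ≤ g j) := fun i j hi hj =>
      h i j (hi.trans n.lt_succ_self) (hj.trans n.lt_succ_self)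
    rw [List.range_succ, List.argmin_concat, List.argmin_concat, ih h']
    cases hc : (List.range n).argmin g with
    | none => rfl
    | some c =>
      have hcn : c < n := List.mem_range.mp (List.argmin_mem hc)
      have hiff : f n < f c ↔ g n < g c := by
        rw [lt_iff_not_ge, lt_iff_not_ge,
          (h c n (hcn.trans n.lt_succ_self) n.lt_succ_self).not]
      simp only [hiff]

lemma leftmostMinIdx_congr {α β : Type*} [LinearOrder α] [Inhabited α]
    [LinearOrder β] [Inhabited β] (X : List α) (Y : List β)
    (hlen : X.length = Y.length)
    (h : ∀ i j, i < X.length → j < X.length →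
      (X.getD i default ≤ X.getD j default ↔ Y.getD i default ≤ Y.getD j default)) :
    leftmostMinIdx X = leftmostMinIdx Y := by
  unfold leftmostMinIdx
  rw [← hlen, argmin_range_congr (fun j => X.getD j default) (fun j => Y.getD j default)
    X.length h]

lemma leftmostMinIdx_lt {α : Type*} [LinearOrder α] [Inhabited α] (S : List α)
    (hS : S ≠ []) : leftmostMinIdx S < S.length := by
  unfold leftmostMinIdx
  cases hc : (List.range S.length).argmin (fun j => S.getD j default) with
  | none =>
    rw [List.argmin_eq_none, List.range_eq_nil, List.length_eq_zero_iff] at hc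
    exact absurd hc hS
  | some c => simpa using List.mem_range.mp (List.argmin_mem hc)

lemma getD_take_lt {γ : Type*} [Inhabited γ] (L : List γ) (k a : ℕ) (ha : a < k) :
    (L.take k).getD a default = L.getD a default := by
  rw [List.getD_eq_getElem?_getD, List.getD_eq_getElem?_getD,
    List.getElem?_take, if_pos ha]

lemma getD_drop' {γ : Type*} [Inhabited γ] (L : List γ) (k a : ℕ) :
    (L.drop k).getD a default = L.getD (k + a) default := by
  rw [List.getD_eq_getElem?_getD, List.getD_eq_getElem?_getD, List.getElem?_drop]

lemma CTaux_fuel {α : Type*} [LinearOrder α] [Inhabited α] :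
    ∀ (N : ℕ) (S : List α) (m : ℕ), S.length = N → S.length ≤ m → CTaux m S = CT S := by
  intro N
  induction N using Nat.strong_induction_on with
  | _ N ihN =>
    intro S m hN hS
    by_cases hE : S = []
    · subst hE
      cases m with
      | zero => rfl
      | succ m => rw [CT]; rfl
    · have hlen : S.length ≠ 0 := by simpa using hE
      obtain ⟨n, hn⟩ := Nat.exists_eq_succ_of_ne_zero hlen
      obtain ⟨m', hm'⟩ : ∃ m', m = m' + 1 := ⟨m - 1, by omega⟩
      have hi := leftmostMinIdx_lt S hE
      have hE' : S.isEmpty = false := by simpa using hE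
      have hT : (S.take (leftmostMinIdx S)).length < N := by
        simp only [List.length_take]; omega
      have hD : (S.drop (leftmostMinIdx S + 1)).length < N := by
        simp only [List.length_drop]; omega
      rw [CT, hn, hm', CTaux, CTaux]
      simp only [hE', Bool.false_eq_true, if_false]
      rw [ihN _ hT _ _ rfl (by omega), ihN _ hD _ _ rfl (by omega),
        ihN _ hT _ _ rfl (by omega), ihN _ hD _ _ rfl (by omega)]

lemma CT_shape_congr {α β : Type*} [LinearOrder α] [Inhabited α]
    [LinearOrder β] [Inhabited β] :
    ∀ (n : ℕ) (X : List α) (Y : List β), X.length = n → X.length = Y.length →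
    (∀ i j, i < X.length → j < X.length →
      (X.getD i default ≤ X.getD j default ↔ Y.getD i default ≤ Y.getD j default)) →
    (CT X).shape = (CT Y).shape := by
  intro n
  induction n using Nat.strong_induction_on with
  | _ n ih =>
    intro X Y hn hlen h
    by_cases hX : X = []
    · subst hX
      have : Y = [] := List.length_eq_zero_iff.mp hlen.symm
      subst this; rfl
    · have hY : Y ≠ [] := by
        intro hY; subst hY; exact hX (List.length_eq_zero_iff.mp hlen)
      have hidx : leftmostMinIdx X = leftmostMinIdx Y := leftmostMinIdx_congr X Y hlen h
      have hi := leftmostMinIdx_lt X hX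
      set i := leftmostMinIdx X with hidef
      have hX' : X.isEmpty = false := by simpa using hX
      have hY' : Y.isEmpty = false := by simpa using hY
      have hlX : X.length ≠ 0 := by simpa using hX
      obtain ⟨m, hm⟩ := Nat.exists_eq_succ_of_ne_zero hlX
      rw [CT, CT, hm, ← hlen, hm, CTaux, CTaux]
      simp only [hX', hY', Bool.false_eq_true, if_false, ← hidx, ← hidef, BTree.shape]
      have hlen1 : (X.take i).length = (Y.take i).length := by
        simp [List.length_take, hlen]
      have hlen2 : (X.drop (i+1)).length = (Y.drop (i+1)).length := by
        simp [List.length_drop, hlen]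
      have s1 : (CT (X.take i)).shape = (CT (Y.take i)).shape := by
        refine ih (X.take i).length ?_ _ _ rfl hlen1 ?_
        · rw [List.length_take]; omega
        · intro a b ha hb
          rw [List.length_take] at ha hb
          have ha' : a < i := lt_of_lt_of_le ha (min_le_left _ _)
          have hb' : b < i := lt_of_lt_of_le hb (min_le_left _ _)
          rw [getD_take_lt X i a ha', getD_take_lt X i b hb', getD_take_lt Y i a ha', getD_take_lt Y i b hb']
          exact h a b (ha'.trans hi) (hb'.trans hi)
      have s2 : (CT (X.drop (i+1))).shape = (CT (Y.drop (i+1))).shape := by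
        refine ih (X.drop (i+1)).length ?_ _ _ rfl hlen2 ?_
        · rw [List.length_drop]; omega
        · intro a b ha hb
          rw [List.length_drop] at ha hb
          rw [getD_drop' X (i+1) a, getD_drop' X (i+1) b, getD_drop' Y (i+1) a, getD_drop' Y (i+1) b]
          exact h _ _ (by omega) (by omega)
      rw [CTaux_fuel _ (X.take i) m rfl (by rw [List.length_take]; omega),
        CTaux_fuel _ (X.drop (i+1)) m rfl (by rw [List.length_drop]; omega),
        CTaux_fuel _ (Y.take i) m rfl (by rw [List.length_take, ← hlen]; omega),
        CTaux_fuel _ (Y.drop (i+1)) m rfl (by rw [List.length_drop, ← hlen]; omega), s1, s2]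

/-- If two equal-length strings order-preserving match then their Cartesian trees
coincide; the converse fails in general. -/
theorem stmt4 {α β : Type*} [LinearOrder α] [Inhabited α] [LinearOrder β] [Inhabited β] :
    (∀ (X : List α) (Y : List β), X.length = Y.length →
      (∀ i j, 1 ≤ i → i ≤ X.length → 1 ≤ j → j ≤ X.length →
        (X.getD (i-1) default ≤ X.getD (j-1) default ↔
         Y.getD (i-1) default ≤ Y.getD (j-1) default)) →
      (CT X).shape = (CT Y).shape)
    ∧
    (∃ (X Y : List ℤ), X.length = Y.length ∧ (CT X).shape = (CT Y).shape ∧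
      ¬ (∀ i j, 1 ≤ i → i ≤ X.length → 1 ≤ j → j ≤ X.length →
        (X.getD (i-1) default ≤ X.getD (j-1) default ↔
         Y.getD (i-1) default ≤ Y.getD (j-1) default))) := by
  
  constructor
  · intro X Y hlen h
    refine CT_shape_congr X.length X Y rfl hlen ?_
    intro i j hi hj
    have := h (i+1) (j+1) (by omega) (by omega) (by omega) (by omega)
    simpa using this
  · refine ⟨[0, 1], [0, 0], rfl, by decide, ?_⟩
    intro h
    have := h 2 1 (by norm_num) (by norm_num) (by norm_num) (by norm_num)
    simp [List.getD] at this
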